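/- arXiv:2503.01026 — 2 statements merged into one kernel-verified Lean document; each statement's English description precedes it below -/
import Mathlib

section
/- The only nonempty palindromic factors of the Narayana word n are 0, 1, 2, 00, 010, and 101. -/
def nu : Fin 3 → List (Fin 3) := fun a => if a = 0 then [0, 1] else if a = 1 then [2] else [0]

def nuPow (k : ℕ) : List (Fin 3) := (fun w => w.flatMap nu)^[k] [0]


def nword (i : ℕ) : Fin 3 := (nuPow (i+2)).getD i 0


def IsFactor (x : List (Fin 3)) : Prop :=
  ∃ i, x = (List.range x.length).map (fun k => nword (i + k))

open List

/-- All factors of length ≤ 5 of the Narayana word. -/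
def S36 : List (List (Fin 3)) := [[],
 [0],[1],[2],
 [0,0],[0,1],[1,0],[1,2],[2,0],
 [0,0,1],[0,1,0],[0,1,2],[1,0,1],[1,2,0],[2,0,0],[2,0,1],
 [0,0,1,0],[0,0,1,2],[0,1,0,1],[0,1,2,0],[1,0,1,2],[1,2,0,0],[1,2,0,1],[2,0,0,1],[2,0,1,2],
 [0,0,1,0,1],[0,0,1,2,0],[0,1,0,1,2],[0,1,2,0,0],[0,1,2,0,1],[1,0,1,2,0],[1,2,0,0,1],
 [1,2,0,1,2],[2,0,0,1,0],[2,0,0,1,2],[2,0,1,2,0]]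

lemma nu_ne_nil : ∀ a : Fin 3, nu a ≠ [] := by decide

section general

variable {α β : Type*} {f : α → List β}

lemma prefix_append_cases {v x y : List α} (h : v <+: x ++ y) :
    v <+: x ∨ ∃ v₂, v = x ++ v₂ ∧ v₂ <+: y := by
  rcases Nat.le_total v.length x.length with hle | hle
  · left
    have hv := List.prefix_iff_eq_take.mp h
    rw [List.take_append_of_le_length hle] at hv
    exact hv ▸ List.take_prefix _ _
  · right
    have hv := List.prefix_iff_eq_take.mp h
    rw [List.take_append, List.take_of_length_le hle] at hv
    exact ⟨_, hv, List.take_prefix _ _⟩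

lemma suffix_append_cases {v x y : List α} (h : v <:+ x ++ y) :
    v <:+ y ∨ ∃ v₁, v = v₁ ++ y ∧ v₁ <:+ x := by
  rcases Nat.le_total v.length y.length with hle | hle
  · left
    have hv := List.suffix_iff_eq_drop.mp h
    rw [List.drop_append] at hv
    have h1 : List.drop ((x ++ y).length - v.length) x = [] := by
      apply List.drop_eq_nil_of_le
      simp only [List.length_append]
      omega
    have h2 : (x ++ y).length - v.length - x.length = y.length - v.length := by
      simp only [List.length_append]; omega
    rw [h1, h2, List.nil_append] at hv
    exact List.suffix_iff_eq_drop.mpr (by simpa using hv)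
  · right
    have hv := List.suffix_iff_eq_drop.mp h
    rw [List.drop_append] at hv
    have h2 : (x ++ y).length - v.length - x.length = 0 := by
      simp only [List.length_append]
      have := h.length_le
      simp only [List.length_append] at this
      omega
    rw [h2, List.drop_zero] at hv
    exact ⟨_, hv, List.drop_suffix _ _⟩

lemma prefix_flatMap (hf : ∀ a, f a ≠ []) :
    ∀ (w : List α) (v : List β), v <+: w.flatMap f → v ≠ [] →
      ∃ u, u <+: w ∧ u.length ≤ v.length ∧ v <+: u.flatMap f := by
  intro w
  induction w with
  | nil =>
    intro v h hne
    rw [List.flatMap_nil] at h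
    exact absurd (List.prefix_nil.mp h) hne
  | cons a w ih =>
    intro v h hne
    rw [List.flatMap_cons] at h
    have h1a : 1 ≤ (f a).length := List.length_pos_iff.mpr (hf a)
    rcases prefix_append_cases h with h1 | ⟨v2, rfl, h2⟩
    · refine ⟨[a], ⟨w, rfl⟩, List.length_pos_iff.mpr hne, ?_⟩
      simpa using h1
    · by_cases hv2 : v2 = []
      · subst hv2
        refine ⟨[a], ⟨w, rfl⟩, by simpa using h1a, ?_⟩
        simp only [List.flatMap_cons, List.flatMap_nil]
        exact List.prefix_rfl
      · obtain ⟨u2, hu2, hlen, hpre⟩ := ih v2 h2 hv2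
        refine ⟨a :: u2, List.cons_prefix_cons.mpr ⟨rfl, hu2⟩, ?_, ?_⟩
        · simp only [List.length_cons, List.length_append]
          omega
        · rw [List.flatMap_cons]
          exact (List.prefix_append_right_inj (f a)).mpr hpre

lemma suffix_flatMap :
    ∀ (w : List α) (s : List β), s <:+ w.flatMap f →
      (∃ w', w' <:+ w ∧ s = w'.flatMap f) ∨
      ∃ a w' r, (a :: w') <:+ w ∧ r <:+ f a ∧ r ≠ [] ∧ s = r ++ w'.flatMap f := by
  intro w
  induction w with
  | nil =>
    intro s h
    rw [List.flatMap_nil] at h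
    exact Or.inl ⟨[], List.suffix_rfl, by simpa using List.suffix_nil.mp h⟩
  | cons a w ih =>
    intro s h
    rw [List.flatMap_cons] at h
    rcases suffix_append_cases h with h1 | ⟨r, rfl, hr⟩
    · rcases ih s h1 with ⟨w', hw', hs⟩ | ⟨b, w', r, hw', hrest⟩
      · exact Or.inl ⟨w', hw'.trans (List.suffix_cons a w), hs⟩
      · exact Or.inr ⟨b, w', r, hw'.trans (List.suffix_cons a w), hrest⟩
    · by_cases hrnil : r = []
      · subst hrnil
        exact Or.inl ⟨w, List.suffix_cons a w, by simp⟩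
      · exact Or.inr ⟨a, w, r, List.suffix_rfl, hr, hrnil, rfl⟩

lemma infix_flatMap (hf : ∀ a, f a ≠ []) {w : List α} {v : List β}
    (h : v <:+: w.flatMap f) (hne : v ≠ []) :
    ∃ u, u <:+: w ∧ u.length ≤ v.length ∧ v <:+: u.flatMap f := by
  obtain ⟨t, hvt, hts⟩ := List.infix_iff_prefix_suffix.mp h
  rcases suffix_flatMap w t hts with ⟨w', hw', rfl⟩ | ⟨a, w', r, hw', hr, hrne, rfl⟩
  · obtain ⟨u, hu, hl, hp⟩ := prefix_flatMap hf w' v hvt hne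
    exact ⟨u, hu.isInfix.trans hw'.isInfix, hl, hp.isInfix⟩
  · have h1a : 1 ≤ (f a).length := List.length_pos_iff.mpr (hf a)
    have hpre1 : [a] <+: a :: w' := ⟨w', rfl⟩
    have hainf : [a] <:+: a :: w' := hpre1.isInfix
    rcases prefix_append_cases hvt with h1 | ⟨v2, rfl, h2⟩
    · refine ⟨[a], hainf.trans hw'.isInfix, List.length_pos_iff.mpr hne, ?_⟩
      have : v <:+: f a := List.infix_iff_prefix_suffix.mpr ⟨r, h1, hr⟩
      simpa using this
    · by_cases hv2 : v2 = []
      · subst hv2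
        refine ⟨[a], hainf.trans hw'.isInfix, ?_, ?_⟩
        · have : 1 ≤ r.length := List.length_pos_iff.mpr hrne
          simp only [List.length_append, List.length_nil, List.length_cons]
          omega
        · rw [List.append_nil]
          simpa using hr.isInfix
      · obtain ⟨u2, hu2, hl2, hp2⟩ := prefix_flatMap hf w' v2 h2 hv2
        refine ⟨a :: u2, ?_, ?_, ?_⟩
        · exact (List.cons_prefix_cons.mpr ⟨rfl, hu2⟩).isInfix.trans hw'.isInfix
        · have : 1 ≤ r.length := List.length_pos_iff.mpr hrne
          simp only [List.length_cons, List.length_append]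
          omega
        · rw [List.flatMap_cons]
          obtain ⟨p, hp⟩ := hr
          obtain ⟨q, hq⟩ := hp2
          exact ⟨p, q, by rw [← hp, ← hq]; simp [List.append_assoc]⟩

lemma infix_eq_drop_take {v w : List α} (h : v <:+: w) :
    ∃ i ≤ w.length, v = (w.drop i).take v.length := by
  obtain ⟨s, t, hst⟩ := h
  refine ⟨s.length, ?_, ?_⟩
  · rw [← hst]; simp only [List.length_append]; omega
  · rw [← hst, List.append_assoc, List.drop_left, List.take_left]

end general

lemma nuPow_zero : nuPow 0 = [0] := rfl

lemma nuPow_succ (k : ℕ) : nuPow (k+1) = (nuPow k).flatMap nu :=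
  Function.iterate_succ_apply' _ _ _

lemma nuPow_prefix (k : ℕ) : nuPow k <+: nuPow (k+1) := by
  induction k with
  | zero => exact ⟨[1], rfl⟩
  | succ k ih =>
    obtain ⟨t, ht⟩ := ih
    refine ⟨t.flatMap nu, ?_⟩
    rw [nuPow_succ k, nuPow_succ (k+1), ← List.flatMap_append, ht]

lemma nuPow_prefix_of_le {k m : ℕ} (h : k ≤ m) : nuPow k <+: nuPow m := by
  induction h with
  | refl => exact List.prefix_rfl
  | step h ih => exact ih.trans (nuPow_prefix _)

lemma length_le_flatMap (u : List (Fin 3)) : u.length ≤ (u.flatMap nu).length := by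
  induction u with
  | nil => simp
  | cons a u ih =>
    rw [List.flatMap_cons]
    have : 1 ≤ (nu a).length := List.length_pos_iff.mpr (nu_ne_nil a)
    simp only [List.length_append, List.length_cons]
    omega

lemma nuPow_length (k : ℕ) : k + 1 ≤ (nuPow k).length := by
  induction k with
  | zero => simp [nuPow_zero]
  | succ k ih =>
    obtain ⟨t, ht⟩ := nuPow_prefix_of_le (Nat.zero_le k)
    rw [nuPow_zero, List.singleton_append] at ht
    rw [nuPow_succ, ← ht, List.flatMap_cons]
    have h1 := length_le_flatMap t
    have h2 : t.length + 1 = (nuPow k).length := by rw [← ht]; simp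
    have h3 : (nu 0).length = 2 := by decide
    simp only [List.length_append]
    omega

lemma nword_eq_getD {m i : ℕ} (h : i < (nuPow m).length) :
    (nuPow m).getD i 0 = nword i := by
  unfold nword
  have h2 : i < (nuPow (i+2)).length := lt_of_lt_of_le (by omega) (nuPow_length (i+2))
  rw [List.getD_eq_getElem _ _ h, List.getD_eq_getElem _ _ h2]
  rcases Nat.le_total m (i+2) with hm | hm
  · exact (nuPow_prefix_of_le hm).getElem h
  · exact ((nuPow_prefix_of_le hm).getElem h2).symm

lemma window_eq {i L m : ℕ} (h : i + L ≤ (nuPow m).length) :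
    (List.range L).map (fun k => nword (i + k)) = ((nuPow m).drop i).take L := by
  apply List.ext_getElem
  · simp only [List.length_map, List.length_range, List.length_take, List.length_drop]
    omega
  · intro k h1 h2
    simp only [List.getElem_map, List.getElem_range, List.getElem_take, List.getElem_drop]
    have hk : i + k < (nuPow m).length := by
      simp only [List.length_map, List.length_range] at h1
      omega
    rw [← nword_eq_getD hk, List.getD_eq_getElem _ _ hk]

lemma window_take_drop (i L a b : ℕ) (h : a + b ≤ L) :
    (((List.range L).map (fun k => nword (i + k))).drop a).take b
      = (List.range b).map (fun k => nword (i + a + k)) := by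
  apply List.ext_getElem
  · simp only [List.length_take, List.length_drop, List.length_map, List.length_range]
    omega
  · intro k h1 h2
    simp only [List.getElem_take, List.getElem_drop, List.getElem_map, List.getElem_range]
    congr 1
    omega

lemma isFactor_infix {x y : List (Fin 3)} (hx : IsFactor x) (hy : y <:+: x) : IsFactor y := by
  obtain ⟨i, hxw⟩ := hx
  obtain ⟨s, t, hst⟩ := hy
  refine ⟨i + s.length, ?_⟩
  have h1 : y = (x.drop s.length).take y.length := by
    rw [← hst, List.append_assoc, List.drop_left, List.take_left]
  have hsl : s.length + y.length ≤ x.length := by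
    rw [← hst]; simp only [List.length_append]; omega
  rw [hxw, window_take_drop i x.length s.length y.length hsl] at h1
  exact h1

lemma S36_closed : ∀ u ∈ S36, ∀ v, v <:+: u.flatMap nu → v.length ≤ 5 → v ∈ S36 := by
  have hdec : S36.all (fun u =>
      ((List.range ((u.flatMap nu).length + 1)).all (fun i =>
        (List.range 6).all (fun L =>
          decide ((((u.flatMap nu).drop i).take L) ∈ S36))))) = true := by decide
  intro u hu v hv hlen
  obtain ⟨i, hi, hveq⟩ := infix_eq_drop_take hv
  have h1 := List.all_eq_true.mp hdec u hu
  have h2 := List.all_eq_true.mp h1 i (List.mem_range.mpr (by omega))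
  have h3 := List.all_eq_true.mp h2 v.length (List.mem_range.mpr (by omega))
  rw [hveq]
  exact of_decide_eq_true h3

lemma factorsLe5 : ∀ m (v : List (Fin 3)), v <:+: nuPow m → v.length ≤ 5 → v ∈ S36 := by
  intro m
  induction m with
  | zero =>
    intro v h _
    have hsub := h.sublist
    have hlen := hsub.length_le
    rw [nuPow_zero] at hsub hlen
    match v, hsub with
    | [], _ => decide
    | [a], hs =>
      have ha : a ∈ [(0 : Fin 3)] := hs.subset (by simp)
      rw [List.mem_singleton] at ha
      subst ha
      decide
    | a :: b :: v, hs => simp at hlen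
  | succ m ih =>
    intro v h hl
    rw [nuPow_succ] at h
    by_cases hv : v = []
    · subst hv; decide
    · obtain ⟨u, hu, hul, hvu⟩ := infix_flatMap nu_ne_nil h hv
      exact S36_closed u (ih u hu (le_trans hul hl)) v hvu hl

lemma mem_S36_of_factor {x : List (Fin 3)} (hx : IsFactor x) (hlen : x.length ≤ 5) :
    x ∈ S36 := by
  obtain ⟨i, hxw⟩ := hx
  have hlm : i + x.length ≤ (nuPow (i + x.length)).length :=
    le_trans (by omega) (nuPow_length (i + x.length))
  have hx2 : x = ((nuPow (i + x.length)).drop i).take x.length := hxw.trans (window_eq hlm)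
  have hinf : x <:+: nuPow (i + x.length) := by
    conv_lhs => rw [hx2]
    exact ((List.take_prefix _ _).isInfix).trans ((List.drop_suffix _ _).isInfix)
  exact factorsLe5 _ x hinf hlen

lemma S36_pal : ∀ v ∈ S36, v ≠ [] → v.reverse = v →
    v ∈ ([[0], [1], [2], [0, 0], [0, 1, 0], [1, 0, 1]] : List (List (Fin 3))) := by decide

lemma tail_dropLast_comm {α : Type*} (l : List α) : l.tail.dropLast = l.dropLast.tail := by
  rw [List.dropLast_eq_take, List.dropLast_eq_take, ← List.drop_one, ← List.drop_one,
    List.drop_take]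
  congr 1
  simp only [List.length_drop]

lemma middle_pal {x : List (Fin 3)} (hp : x.reverse = x) :
    (x.tail.dropLast).reverse = x.tail.dropLast := by
  calc (x.tail.dropLast).reverse = x.tail.reverse.tail := List.tail_reverse.symm
    _ = x.reverse.dropLast.tail := by rw [List.dropLast_reverse]
    _ = x.dropLast.tail := by rw [hp]
    _ = x.tail.dropLast := (tail_dropLast_comm x).symm

lemma fwd : ∀ (N : ℕ) (x : List (Fin 3)), x.length ≤ N → x ≠ [] → IsFactor x →
    x.reverse = x →
    x ∈ ([[0], [1], [2], [0, 0], [0, 1, 0], [1, 0, 1]] : List (List (Fin 3))) := by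
  intro N
  induction N with
  | zero =>
    intro x hl hne _ _
    exact absurd (List.length_eq_zero_iff.mp (Nat.le_zero.mp hl)) hne
  | succ N ih =>
    intro x hl hne hf hp
    rcases le_or_gt x.length 5 with h5 | h5
    · exact S36_pal x (mem_S36_of_factor hf h5) hne hp
    · set y := x.tail.dropLast with hy
      have hylen : y.length = x.length - 2 := by
        rw [hy, List.length_dropLast, List.length_tail]
        omega
      have hyinf : y <:+: x := by
        rw [hy, List.dropLast_eq_take]
        exact ((List.take_prefix _ _).isInfix).trans (List.tail_suffix x).isInfix
      have hyf : IsFactor y := isFactor_infix hf hyinf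
      have hyne : y ≠ [] := by
        intro h
        rw [h, List.length_nil] at hylen
        omega
      have hypal : y.reverse = y := middle_pal hp
      have hmem := ih y (by omega) hyne hyf hypal
      have hy4 : 4 ≤ y.length := by omega
      exfalso
      simp only [List.mem_cons, List.not_mem_nil, or_false] at hmem
      have hlen3 : y.length ≤ 3 := by
        rcases hmem with h | h | h | h | h | h <;> simp [h]
      omega

theorem narayana_palindromes (x : List (Fin 3)) :
    (x ≠ [] ∧ IsFactor x ∧ x.reverse = x) ↔
      x ∈ ([[0], [1], [2], [0, 0], [0, 1, 0], [1, 0, 1]] : List (List (Fin 3))) := by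
  constructor
  · rintro ⟨hne, hf, hp⟩
    exact fwd x.length x le_rfl hne hf hp
  · intro hx
    simp only [List.mem_cons, List.not_mem_nil, or_false] at hx
    rcases hx with rfl | rfl | rfl | rfl | rfl | rfl
    · exact ⟨by simp, ⟨0, by decide⟩, by decide⟩
    · exact ⟨by simp, ⟨1, by decide⟩, by decide⟩
    · exact ⟨by simp, ⟨2, by decide⟩, by decide⟩
    · exact ⟨by simp, ⟨3, by decide⟩, by decide⟩
    · exact ⟨by simp, ⟨4, by decide⟩, by decide⟩
    · exact ⟨by simp, ⟨5, by decide⟩, by decide⟩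
end

section
/- For all j ≥ 1, the sequences a and b satisfy: (i) b(j) = a(a(a(j))) + 1; (ii) b(j) = a(a(j)) + j; (iii) b(a(j)) = a(a(a(j))) + a(j); (iv) a(b(j)) = a(j) + b(j); (v) b(a(j)) = a(j) + b(j) − 1. -/
def nara : ℕ → ℕ
  | 0 => 1
  | 1 => 2
  | 2 => 3
  | (i+3) => nara (i+2) + nara i


def NaraRep (F : Finset ℕ) (m : ℕ) : Prop :=
  (∑ f ∈ F, nara f) = m ∧ ∀ a ∈ F, ∀ b ∈ F, a < b → a + 3 ≤ b

lemma nara_pos : ∀ i, 0 < nara i := by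
  intro i
  induction i using Nat.strong_induction_on with
  | _ i ih =>
    match i with
    | 0 => simp [nara]
    | 1 => simp [nara]
    | 2 => simp [nara]
    | (k+3) =>
      have := ih (k+2) (by omega)
      simp [nara]; omega

lemma nara_lt_succ : ∀ i, nara i < nara (i+1) := by
  intro i
  match i with
  | 0 => simp [nara]
  | 1 => simp [nara]
  | 2 => simp [nara]
  | (k+3) =>
    have h1 := nara_pos (k+1)
    have : nara (k+3+1) = nara (k+3) + nara (k+1) := by
      show nara ((k+1)+3) = _
      simp [nara]
    omega

lemma nara_strictMono : StrictMono nara :=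
  strictMono_nat_of_lt_succ nara_lt_succ

lemma nara_ge : ∀ i, i + 1 ≤ nara i := by
  intro i
  induction i with
  | zero => simp [nara]
  | succ k ih => have := nara_lt_succ k; omega

lemma naraRep_mem_le {F : Finset ℕ} {m : ℕ} (h : NaraRep F m) {f : ℕ} (hf : f ∈ F) :
    nara f ≤ m := by
  rw [← h.1]
  exact Finset.single_le_sum (fun _ _ => Nat.zero_le _) hf

lemma exists_naraRep : ∀ m, ∃ F, NaraRep F m := by
  intro m
  induction m using Nat.strong_induction_on with
  | _ m ih =>
    rcases Nat.eq_zero_or_pos m with h | h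
    · exact ⟨∅, by simp [NaraRep, h]⟩
    · set P : ℕ → Prop := fun i => nara i ≤ m with hP
      have hP0 : P 0 := by simp [hP, nara]; omega
      set i := Nat.findGreatest P m with hi
      have hile : nara i ≤ m := Nat.findGreatest_spec (Nat.zero_le m) hP0
      have hupper : m < nara (i + 1) := by
        by_cases hc : i + 1 ≤ m
        · have := Nat.findGreatest_is_greatest (P := P) (n := m) (k := i + 1)
            (by omega) hc
          simp [hP] at this
          omega
        · have := nara_ge (i + 1)
          omega
      match i, hile, hupper with
      | 0, hile, hupper =>
        refine ⟨{0}, ?_, ?_⟩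
        · simp [nara] at hile hupper ⊢; omega
        · intro x hx y hy hxy; simp at hx hy; omega
      | 1, hile, hupper =>
        refine ⟨{1}, ?_, ?_⟩
        · simp [nara] at hile hupper ⊢; omega
        · intro x hx y hy hxy; simp at hx hy; omega
      | 2, hile, hupper =>
        refine ⟨{2}, ?_, ?_⟩
        · simp [nara] at hile hupper ⊢
          have : nara 3 = 4 := by simp [nara]
          omega
        · intro x hx y hy hxy; simp at hx hy; omega
      | (k+3), hile, hupper =>
        have hrec : nara (k + 3 + 1) = nara (k + 3) + nara (k + 1) := by
          show nara ((k+1)+3) = _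
          simp [nara]
        have hm' : m - nara (k+3) < nara (k+1) := by omega
        have hlt : m - nara (k+3) < m := by
          have := nara_pos (k+3); omega
        obtain ⟨F', hF'⟩ := ih (m - nara (k+3)) hlt
        have hbound : ∀ f ∈ F', f + 3 ≤ k + 3 := by
          intro f hf
          have h1 := naraRep_mem_le hF' hf
          have h2 : nara f < nara (k+1) := by omega
          have := nara_strictMono.lt_iff_lt.mp h2
          omega
        have hnotmem : k + 3 ∉ F' := by
          intro hmem
          have := hbound _ hmem; omega
        refine ⟨insert (k+3) F', ?_, ?_⟩
        · rw [Finset.sum_insert hnotmem, hF'.1]; omega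
        · intro x hx y hy hxy
          simp at hx hy
          rcases hx with rfl | hx
          · rcases hy with rfl | hy
            · omega
            · have := hbound _ hy; omega
          · rcases hy with rfl | hy
            · exact hbound _ hx
            · exact hF'.2 x hx y hy hxy

lemma sum_image_add (F : Finset ℕ) (k : ℕ) (g : ℕ → ℕ) :
    ∑ x ∈ F.image (· + k), g x = ∑ f ∈ F, g (f + k) :=
  Finset.sum_image (by intro x _ y _ hxy; beta_reduce at hxy; omega)

lemma naraRep_shift (F : Finset ℕ) (k : ℕ) (h : NaraRep F (∑ f ∈ F, nara f)) :
    NaraRep (F.image (· + k)) (∑ f ∈ F, nara (f + k)) := by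
  refine ⟨?_, ?_⟩
  · exact sum_image_add F k nara
  · intro x hx y hy hxy
    simp only [Finset.mem_image] at hx hy
    obtain ⟨x', hx', rfl⟩ := hx
    obtain ⟨y', hy', rfl⟩ := hy
    have := h.2 x' hx' y' hy' (by omega)
    omega

theorem kimberling_moses_identities (a b : ℕ → ℕ)
    (ha : ∀ j : ℕ, 1 ≤ j → ∀ F : Finset ℕ, NaraRep F (j - 1) →
      a j = (∑ f ∈ F, nara (f + 1)) + 1)
    (hb : ∀ j : ℕ, 1 ≤ j → ∀ F : Finset ℕ, NaraRep F (j - 1) →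
      b j = (∑ f ∈ F, nara (f + 3)) + 2) :
    ∀ j : ℕ, 1 ≤ j →
      b j = a (a (a j)) + 1 ∧
      b j = a (a j) + j ∧
      b (a j) = a (a (a j)) + a j ∧
      a (b j) = a j + b j ∧
      b (a j) + 1 = a j + b j := by
  intro j hj
  obtain ⟨F, hF⟩ := exists_naraRep (j - 1)
  have hF' : NaraRep F (∑ f ∈ F, nara f) := ⟨rfl, hF.2⟩
  have hS0 : ∑ f ∈ F, nara f = j - 1 := hF.1
  set S1 := ∑ f ∈ F, nara (f + 1) with hS1def
  set S2 := ∑ f ∈ F, nara (f + 2) with hS2def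
  set S3 := ∑ f ∈ F, nara (f + 3) with hS3def
  set S4 := ∑ f ∈ F, nara (f + 4) with hS4def
  -- recurrences on sums
  have hS3eq : S3 = S2 + (j - 1) := by
    rw [hS3def, hS2def, ← hS0, ← Finset.sum_add_distrib]
    exact Finset.sum_congr rfl (fun f _ => by simp [nara])
  have hS4eq : S4 = S3 + S1 := by
    rw [hS4def, hS3def, hS1def, ← Finset.sum_add_distrib]
    refine Finset.sum_congr rfl (fun f _ => ?_)
    show nara ((f+1)+3) = _
    simp [nara]
  -- values
  have haj : a j = S1 + 1 := ha j hj F hF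
  have hbj : b j = S3 + 2 := hb j hj F hF
  have hrep1 : NaraRep (F.image (· + 1)) (a j - 1) := by
    have := naraRep_shift F 1 hF'
    rwa [show (∑ f ∈ F, nara (f + 1)) = a j - 1 by omega] at this
  have haaj : a (a j) = S2 + 1 := by
    have := ha (a j) (by omega) _ hrep1
    rwa [sum_image_add F 1 (fun x => nara (x + 1))] at this
  have hbaj : b (a j) = S4 + 2 := by
    have := hb (a j) (by omega) _ hrep1
    rw [sum_image_add F 1 (fun x => nara (x + 3))] at this
    rw [this, hS4def]
  have hrep2 : NaraRep (F.image (· + 2)) (a (a j) - 1) := by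
    have := naraRep_shift F 2 hF'
    rwa [show (∑ f ∈ F, nara (f + 2)) = a (a j) - 1 by omega] at this
  have haaaj : a (a (a j)) = S3 + 1 := by
    have := ha (a (a j)) (by omega) _ hrep2
    rw [sum_image_add F 2 (fun x => nara (x + 1))] at this
    rw [this, hS3def]
  -- representation of b j - 1 = S3 + 1
  have h0notmem : (0 : ℕ) ∉ F.image (· + 3) := by
    simp
  have hrep3 : NaraRep (insert 0 (F.image (· + 3))) (b j - 1) := by
    have hsh := naraRep_shift F 3 hF'
    refine ⟨?_, ?_⟩
    · rw [Finset.sum_insert h0notmem, hsh.1]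
      show nara 0 + S3 = b j - 1
      simp [nara]; omega
    · intro x hx y hy hxy
      simp only [Finset.mem_insert] at hx hy
      rcases hx with rfl | hx
      · rcases hy with rfl | hy
        · omega
        · simp only [Finset.mem_image] at hy
          obtain ⟨y', _, rfl⟩ := hy; omega
      · rcases hy with rfl | hy
        · omega
        · exact hsh.2 x hx y hy hxy
  have habj : a (b j) = S4 + 3 := by
    have := ha (b j) (by omega) _ hrep3
    rw [Finset.sum_insert h0notmem] at this
    rw [sum_image_add F 3 (fun x => nara (x + 1))] at this
    rw [this]
    have h1 : nara (0 + 1) = 2 := by rfl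
    have h2 : (∑ f ∈ F, nara (f + 3 + 1)) = S4 := rfl
    omega
  refine ⟨by omega, by omega, by omega, by omega, by omega⟩
end
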